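/- M^[2](2, n) = ⌊n/2⌋ + 2 for every n ≥ 5. -/

import Mathlib

/-- An adaptive group-testing strategy on a population of `n` items:
a binary decision tree whose internal nodes test a subset (branching on
contaminated / pure) and whose leaves output a guess for the defective set. -/
inductive GTTree (n : ℕ) : Type where
  | leaf (guess : Finset (Fin n)) : GTTree n
  | node (test : Finset (Fin n)) (pos neg : GTTree n) : GTTree n

/-- Run the strategy when the true defective set is `D`. -/
def GTTree.run {n : ℕ} (D : Finset (Fin n)) : GTTree n → Finset (Fin n)
  | .leaf g => g
  | .node t p q => if (t ∩ D).Nonempty then p.run D else q.run D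

/-- Worst-case number of tests performed by the strategy. -/
def GTTree.depth {n : ℕ} : GTTree n → ℕ
  | .leaf _ => 0
  | .node _ p q => max p.depth q.depth + 1

/-- The strategy correctly identifies every possible defective set of size `d`. -/
def GTTree.Solves {n : ℕ} (T : GTTree n) (d : ℕ) : Prop :=
  ∀ D : Finset (Fin n), D.card = d → T.run D = D

/-- Every test set occurring in the tree has size exactly `k`. -/
def GTTree.SizeK {n : ℕ} (k : ℕ) : GTTree n → Prop
  | .leaf _ => True
  | .node t p q => t.card = k ∧ p.SizeK k ∧ q.SizeK k

/-- `M d n`: optimal worst-case number of adaptive tests to find the `d`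
defectives among `n` items, test sets of arbitrary size (`⊤` if unsolvable). -/
noncomputable def M (d n : ℕ) : ℕ∞ :=
  sInf {c : ℕ∞ | ∃ T : GTTree n, T.Solves d ∧ (T.depth : ℕ∞) = c}

/-- `Mfix k d n`: optimal worst-case number of adaptive tests to find the `d`
defectives among `n` items, every test set of size exactly `k` (`⊤` if unsolvable). -/
noncomputable def Mfix (k d n : ℕ) : ℕ∞ :=
  sInf {c : ℕ∞ | ∃ T : GTTree n, T.SizeK k ∧ T.Solves d ∧ (T.depth : ℕ∞) = c}


def Solvable (n : ℕ) : ℕ → Finset (Finset (Fin n)) → Prop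
  | 0, C => C.card ≤ 1
  | k+1, C => C.card ≤ 1 ∨ ∃ t : Finset (Fin n), t.card = 2 ∧
      Solvable n k (C.filter fun D => (t ∩ D).Nonempty) ∧
      Solvable n k (C.filter fun D => t ∩ D = ∅)

theorem Solvable.mono_subset {n k : ℕ} {C C' : Finset (Finset (Fin n))}
    (hsub : C' ⊆ C) (h : Solvable n k C) : Solvable n k C' := by
  induction k generalizing C C' with
  | zero => exact le_trans (Finset.card_le_card hsub) h
  | succ k ih =>
    rcases h with h | ⟨t, ht, hp, hq⟩
    · exact Or.inl (le_trans (Finset.card_le_card hsub) h)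
    · exact Or.inr ⟨t, ht, ih (Finset.filter_subset_filter _ hsub) hp,
        ih (Finset.filter_subset_filter _ hsub) hq⟩

theorem Solvable.succ {n k : ℕ} {C : Finset (Finset (Fin n))}
    (h : Solvable n k C) : Solvable n (k+1) C := by
  induction k generalizing C with
  | zero => exact Or.inl h
  | succ k ih =>
    rcases h with h | ⟨t, ht, hp, hq⟩
    · exact Or.inl h
    · exact Or.inr ⟨t, ht, ih hp, ih hq⟩

theorem Solvable.mono_k {n k k' : ℕ} {C : Finset (Finset (Fin n))}
    (hk : k ≤ k') (h : Solvable n k C) : Solvable n k' C := by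
  induction k' with
  | zero => exact Nat.le_zero.mp hk ▸ h
  | succ k' ih =>
    rcases Nat.lt_or_ge k (k'+1) with h' | h'
    · exact (ih (by omega)).succ
    · exact (by omega : k = k'+1) ▸ h

theorem Solvable.card_le {n k : ℕ} {C : Finset (Finset (Fin n))}
    (h : Solvable n k C) : C.card ≤ 2 ^ k := by
  induction k generalizing C with
  | zero => exact h
  | succ k ih =>
    rcases h with h | ⟨t, ht, hp, hq⟩
    · calc C.card ≤ 1 := h
        _ ≤ 2 ^ (k+1) := Nat.one_le_two_pow
    · have key : (C.filter fun D => (t ∩ D).Nonempty).card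
          + (C.filter fun D => t ∩ D = ∅).card = C.card := by
        have : (C.filter fun D => t ∩ D = ∅)
            = C.filter fun D => ¬ (t ∩ D).Nonempty := by
          apply Finset.filter_congr
          intro D _
          simp [Finset.not_nonempty_iff_eq_empty]
        rw [this]
        exact Finset.card_filter_add_card_filter_not _
      have := ih hp
      have := ih hq
      rw [pow_succ]
      omega

theorem tree_solvable {n : ℕ} (T : GTTree n) (h2 : T.SizeK 2)
    (C : Finset (Finset (Fin n))) (hC : ∀ D ∈ C, T.run D = D) :
    Solvable n T.depth C := by
  induction T generalizing C with
  | leaf g =>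
    have : C ⊆ {g} := by
      intro D hD
      have := hC D hD
      simp [GTTree.run] at this
      simp [this]
    exact le_trans (Finset.card_le_card this) (by simp)
  | node t p q ihp ihq =>
    obtain ⟨ht, hp2, hq2⟩ := h2
    refine Or.inr ⟨t, ht, ?_, ?_⟩
    · refine (ihp hp2 _ ?_).mono_k (le_max_left _ _)
      intro D hD
      rw [Finset.mem_filter] at hD
      have := hC D hD.1
      rwa [GTTree.run, if_pos hD.2] at this
    · refine (ihq hq2 _ ?_).mono_k (le_max_right _ _)
      intro D hD
      rw [Finset.mem_filter] at hD
      have := hC D hD.1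
      rw [GTTree.run, if_neg (by simp [hD.2])] at this
      exact this
theorem filter_neg_powersetCard {n : ℕ} (U t : Finset (Fin n)) :
    ((Finset.powersetCard 2 U).filter fun D => t ∩ D = ∅)
      = Finset.powersetCard 2 (U \ t) := by
  ext D
  simp only [Finset.mem_filter, Finset.mem_powersetCard, Finset.subset_sdiff]
  rw [← Finset.disjoint_iff_inter_eq_empty, disjoint_comm]
  tauto
theorem filter_partition {n : ℕ} (t : Finset (Fin n)) (C : Finset (Finset (Fin n))) :
    (C.filter fun D => (t ∩ D).Nonempty).card
      + (C.filter fun D => t ∩ D = ∅).card = C.card := by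
  have : (C.filter fun D => t ∩ D = ∅)
      = C.filter fun D => ¬ (t ∩ D).Nonempty := by
    apply Finset.filter_congr
    intro D _
    simp [Finset.not_nonempty_iff_eq_empty]
  rw [this]
  exact Finset.card_filter_add_card_filter_not _

theorem lower_main {n : ℕ} (k : ℕ) :
    ∀ U : Finset (Fin n), 5 ≤ U.card → Solvable n k (Finset.powersetCard 2 U) →
      U.card / 2 + 2 ≤ k := by
  induction k with
  | zero =>
    intro U hU h
    exfalso
    have hcard : (Finset.powersetCard 2 U).card = U.card.choose 2 :=
      Finset.card_powersetCard _ _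
    have h10 : 10 ≤ U.card.choose 2 :=
      le_trans (by decide) (Nat.choose_le_choose 2 hU)
    have : (Finset.powersetCard 2 U).card ≤ 1 := h
    omega
  | succ k ih =>
    intro U hU h
    have hcard : (Finset.powersetCard 2 U).card = U.card.choose 2 :=
      Finset.card_powersetCard _ _
    have h10 : 10 ≤ U.card.choose 2 :=
      le_trans (by decide) (Nat.choose_le_choose 2 hU)
    have hcount := h.card_le
    rcases h with h | ⟨t, ht, hp, hq⟩
    · omega
    rw [filter_neg_powersetCard] at hq
    have htU : (U ∩ t).card ≤ 2 :=
      le_trans (Finset.card_le_card Finset.inter_subset_right) ht.le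
    have hUt : (U \ t).card = U.card - (U ∩ t).card := by
      rw [← Finset.sdiff_inter_self_left]
      exact Finset.card_sdiff_of_subset Finset.inter_subset_left
    rcases Nat.lt_or_ge U.card 7 with h7 | h7
    · rcases (by omega : U.card = 5 ∨ U.card = 6) with h5 | h6
      · have hch : Nat.choose 5 2 = 10 := by decide
        rw [hcard, h5, hch] at hcount
        have hnk : ¬ (k + 1 ≤ 3) := by
          intro hk
          have : (2:ℕ) ^ (k+1) ≤ 2 ^ 3 := Nat.pow_le_pow_right (by norm_num) hk
          omega
        omega
      · have hi : (U ∩ t).card = 0 ∨ (U ∩ t).card = 1 ∨ (U ∩ t).card = 2 := by omega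
        rcases hi with h0 | h1 | h2
        · have : U \ t = U := by
            rw [Finset.sdiff_eq_self_iff_disjoint, Finset.disjoint_iff_inter_eq_empty]
            exact Finset.card_eq_zero.mp h0
          rw [this] at hq
          have := ih U (by omega) hq
          omega
        · have hc : (U \ t).card = 5 := by omega
          have hqc := hq.card_le
          rw [Finset.card_powersetCard, hc] at hqc
          have hch : Nat.choose 5 2 = 10 := by decide
          rw [hch] at hqc
          have hnk : ¬ (k ≤ 3) := by
            intro hk
            have : (2:ℕ) ^ k ≤ 2 ^ 3 := Nat.pow_le_pow_right (by norm_num) hk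
            omega
          omega
        · have hc : (U \ t).card = 4 := by omega
          have hqc : (Finset.powersetCard 2 (U \ t)).card = 6 := by
            rw [Finset.card_powersetCard, hc]
            decide
          have hpart := filter_partition t (Finset.powersetCard 2 U)
          rw [filter_neg_powersetCard, hqc, hcard, h6] at hpart
          have hch : Nat.choose 6 2 = 15 := by decide
          rw [hch] at hpart
          have hpc := hp.card_le
          have hnk : ¬ (k ≤ 3) := by
            intro hk
            have : (2:ℕ) ^ k ≤ 2 ^ 3 := Nat.pow_le_pow_right (by norm_num) hk
            omega
          omega
    · have h5t : 5 ≤ (U \ t).card := by omega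
      have := ih (U \ t) h5t hq
      have hdiv : (U.card - 2) / 2 ≤ (U \ t).card / 2 := Nat.div_le_div_right (by omega)
      omega

/-- Lower bound: any size-2 strategy solving `(2,n)` has depth at least `n/2+2`. -/
theorem lower_bound {n : ℕ} (hn : 5 ≤ n) (T : GTTree n) (h2 : T.SizeK 2)
    (hs : T.Solves 2) : n / 2 + 2 ≤ T.depth := by
  have hsolv : Solvable n T.depth (Finset.powersetCard 2 (Finset.univ : Finset (Fin n))) := by
    apply tree_solvable T h2
    intro D hD
    rw [Finset.mem_powersetCard] at hD
    exact hs D hD.2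
  have := lower_main T.depth (Finset.univ : Finset (Fin n)) (by simpa using hn) hsolv
  simpa using this
namespace Upper
variable {n : ℕ}

/-- Phase 1 scaffold: test each pair in `l`, accumulating the positive pairs,
then hand over to the resolver `res`. -/
def phase (res : List (Fin n × Fin n) → GTTree n) :
    List (Fin n × Fin n) → List (Fin n × Fin n) → GTTree n
  | [], acc => res acc
  | p :: l, acc =>
      .node {p.1, p.2} (phase res l (acc ++ [p])) (phase res l acc)

def hit (D : Finset (Fin n)) (p : Fin n × Fin n) : Bool :=
  decide (({p.1, p.2} : Finset (Fin n)) ∩ D).Nonempty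

theorem phase_run (res : List (Fin n × Fin n) → GTTree n) (D : Finset (Fin n)) :
    ∀ (l acc : List (Fin n × Fin n)),
      (phase res l acc).run D = (res (acc ++ l.filter (hit D))).run D := by
  intro l
  induction l with
  | nil => intro acc; simp [phase]
  | cons p l ih =>
    intro acc
    by_cases h : (({p.1, p.2} : Finset (Fin n)) ∩ D).Nonempty
    · rw [phase, GTTree.run, if_pos h, ih, List.filter_cons_of_pos (by simp [hit, h])]
      simp
    · rw [phase, GTTree.run, if_neg h, ih, List.filter_cons_of_neg (by simp [hit, h])]

theorem phase_depth (res : List (Fin n × Fin n) → GTTree n)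
    (hres : ∀ acc, (res acc).depth ≤ 2) :
    ∀ (l acc : List (Fin n × Fin n)), (phase res l acc).depth ≤ l.length + 2 := by
  intro l
  induction l with
  | nil => intro acc; simpa [phase] using hres acc
  | cons p l ih =>
    intro acc
    have h1 := ih (acc ++ [p])
    have h2 := ih acc
    simp only [phase, GTTree.depth, List.length_cons]
    omega

theorem phase_sizeK (res : List (Fin n × Fin n) → GTTree n)
    (hres : ∀ acc, (res acc).SizeK 2) :
    ∀ (l acc : List (Fin n × Fin n)),
      (∀ p ∈ l, ({p.1, p.2} : Finset (Fin n)).card = 2) →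
      (phase res l acc).SizeK 2 := by
  intro l
  induction l with
  | nil => intro acc _; exact hres acc
  | cons p l ih =>
    intro acc hl
    exact ⟨hl p (by simp), ih _ (fun q hq => hl q (by simp [hq])),
      ih _ (fun q hq => hl q (by simp [hq]))⟩

/-- The `i`-th disjoint pair `(2i, 2i+1)`. -/
def pr (i : Fin (n/2)) : Fin n × Fin n :=
  (⟨2*i.val, by have := i.isLt; omega⟩, ⟨2*i.val+1, by have := i.isLt; omega⟩)

def L (n : ℕ) : List (Fin n × Fin n) := (List.finRange (n/2)).map pr

theorem mem_L {p : Fin n × Fin n} : p ∈ L n ↔ ∃ i : Fin (n/2), pr i = p := by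
  simp [L]

theorem length_L : (L n).length = n / 2 := by simp [L]

theorem nodup_L : (L n).Nodup := by
  refine (List.nodup_finRange _).map ?_
  intro i j hij
  have : (pr i).1.val = (pr j).1.val := by rw [hij]
  simp only [pr] at this
  exact Fin.ext (by omega)

def fz (hn : 5 ≤ n) : Fin n := ⟨n-1, by omega⟩

noncomputable def pick (hn : 5 ≤ n) (bad : Finset (Fin n)) : Fin n :=
  if h : (Finset.univ \ bad).Nonempty then h.choose else fz hn

theorem pick_not_mem (hn : 5 ≤ n) (bad : Finset (Fin n)) (hb : bad.card ≤ 4) :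
    pick hn bad ∉ bad := by
  have h : (Finset.univ \ bad).Nonempty := by
    rw [← Finset.card_pos, Finset.card_sdiff_of_subset (Finset.subset_univ _)]
    have : (Finset.univ : Finset (Fin n)).card = n := by simp
    omega
  rw [pick, dif_pos h]
  exact (Finset.mem_sdiff.mp h.choose_spec).2

/-- The resolver: given the list of positive pairs, 2 more tests suffice. -/
noncomputable def res (hn : 5 ≤ n) : List (Fin n × Fin n) → GTTree n
  | [] => .leaf ∅
  | [(a,b)] =>
      let p := pick hn {a, b, fz hn}
      .node {a, p}
        (.node {b, p} (.leaf {a, b}) (.leaf {a, fz hn}))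
        (.leaf {b, fz hn})
  | (a,b) :: (c,d) :: _ =>
      let q := pick hn {a, b, c, d}
      .node {a, q}
        (.node {c, q} (.leaf {a, c}) (.leaf {a, d}))
        (.node {c, q} (.leaf {b, c}) (.leaf {b, d}))

theorem res_depth (hn : 5 ≤ n) (acc : List (Fin n × Fin n)) : (res hn acc).depth ≤ 2 := by
  rcases acc with _ | ⟨⟨a,b⟩, _ | ⟨⟨c,d⟩, rest⟩⟩ <;> simp [res, GTTree.depth]

theorem card_pair {a b : Fin n} (hab : a ≠ b) : ({a, b} : Finset (Fin n)).card = 2 := by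
  rw [Finset.card_insert_of_notMem (by simp [hab]), Finset.card_singleton]

theorem res_sizeK (hn : 5 ≤ n) (acc : List (Fin n × Fin n)) : (res hn acc).SizeK 2 := by
  rcases acc with _ | ⟨⟨a,b⟩, _ | ⟨⟨c,d⟩, rest⟩⟩
  · trivial
  · have hp := pick_not_mem hn {a, b, fz hn} (by
      refine le_trans (Finset.card_insert_le _ _) ?_
      refine Nat.succ_le_succ (le_trans (Finset.card_insert_le _ _) ?_)
      simp)
    simp only [Finset.mem_insert, Finset.mem_singleton, not_or] at hp
    refine ⟨card_pair (fun h => hp.1 h.symm), ⟨card_pair (fun h => hp.2.1 h.symm),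
      trivial, trivial⟩, trivial⟩
  · have hq := pick_not_mem hn {a, b, c, d} (by
      refine le_trans (Finset.card_insert_le _ _) ?_
      refine Nat.succ_le_succ (le_trans (Finset.card_insert_le _ _) ?_)
      refine Nat.succ_le_succ (le_trans (Finset.card_insert_le _ _) ?_)
      simp)
    simp only [Finset.mem_insert, Finset.mem_singleton, not_or] at hq
    exact ⟨card_pair (fun h => hq.1 h.symm),
      ⟨card_pair (fun h => hq.2.2.1 h.symm), trivial, trivial⟩,
      ⟨card_pair (fun h => hq.2.2.1 h.symm), trivial, trivial⟩⟩

end Upper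
namespace Upper

theorem inter_pair_nonempty {n : ℕ} {D : Finset (Fin n)} {u v : Fin n} (hv : v ∉ D) :
    (({u, v} : Finset (Fin n)) ∩ D).Nonempty ↔ u ∈ D := by
  constructor
  · rintro ⟨w, hw⟩
    rw [Finset.mem_inter, Finset.mem_insert, Finset.mem_singleton] at hw
    rcases hw.1 with rfl | rfl
    · exact hw.2
    · exact absurd hw.2 hv
  · intro h; exact ⟨u, Finset.mem_inter.mpr ⟨by simp, h⟩⟩

theorem cover {n : ℕ} (hn : 5 ≤ n) (x : Fin n) :
    (∃ i : Fin (n/2), x ∈ ({(pr i).1, (pr i).2} : Finset (Fin n))) ∨ x = fz hn := by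
  have hx := x.isLt
  by_cases h : x.val < 2 * (n/2)
  · left
    refine ⟨⟨x.val/2, by omega⟩, ?_⟩
    simp only [pr, Finset.mem_insert, Finset.mem_singleton, Fin.ext_iff]
    omega
  · right
    simp only [fz, Fin.ext_iff]
    omega

theorem upper {n : ℕ} (hn : 5 ≤ n) :
    ∃ T : GTTree n, T.SizeK 2 ∧ T.Solves 2 ∧ T.depth ≤ n/2 + 2 := by
  refine ⟨phase (res hn) (L n) [], ?_, ?_, ?_⟩
  · apply phase_sizeK _ (res_sizeK hn)
    intro p hp
    rw [mem_L] at hp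
    obtain ⟨i, rfl⟩ := hp
    exact card_pair (by simp [pr, Fin.ext_iff])
  · intro D hD
    rw [phase_run, List.nil_append]
    obtain ⟨pos, hpos⟩ : ∃ pos, (L n).filter (hit D) = pos := ⟨_, rfl⟩
    rw [hpos]
    have hmem : ∀ p ∈ pos, (∃ i, pr i = p) ∧ (({p.1, p.2} : Finset (Fin n)) ∩ D).Nonempty := by
      intro p hp
      rw [← hpos, List.mem_filter] at hp
      exact ⟨mem_L.mp hp.1, by simpa [hit] using hp.2⟩
    have hpos_of : ∀ p ∈ L n, (({p.1, p.2} : Finset (Fin n)) ∩ D).Nonempty → p ∈ pos := by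
      intro p hp h
      rw [← hpos, List.mem_filter]
      exact ⟨hp, by simpa [hit]⟩
    have hcov : ∀ x ∈ D, (∃ p ∈ pos, x ∈ ({p.1, p.2} : Finset (Fin n))) ∨ x = fz hn := by
      intro x hx
      rcases cover hn x with ⟨i, hi⟩ | hz
      · exact Or.inl ⟨pr i, hpos_of _ (mem_L.mpr ⟨i, rfl⟩)
          ⟨x, Finset.mem_inter.mpr ⟨hi, hx⟩⟩, hi⟩
      · exact Or.inr hz
    have hnodup : pos.Nodup := hpos ▸ (nodup_L.filter _)
    obtain ⟨x, y, hxy, rfl⟩ := Finset.card_eq_two.mp hD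
    rcases pos with _ | ⟨⟨a,b⟩, _ | ⟨⟨c,d⟩, rest⟩⟩
    · -- no positive pair: impossible
      exfalso
      have hx := hcov x (by simp)
      have hy := hcov y (by simp)
      simp only [List.not_mem_nil, false_and, exists_false, false_or] at hx hy
      exact hxy (hx.trans hy.symm)
    · -- one positive pair
      obtain ⟨⟨i, hi⟩, hhit⟩ := hmem (a,b) (by simp)
      have hav : 2*i.val = a.val := congrArg (fun p => (Prod.fst p).val) hi
      have hbv : 2*i.val + 1 = b.val := congrArg (fun p => (Prod.snd p).val) hi
      have hab : a ≠ b := fun h => by rw [Fin.ext_iff] at h; omega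
      set D := ({x, y} : Finset (Fin n)) with hDdef
      have hsub : D ⊆ {a, b, fz hn} := by
        intro w hw
        rcases hcov w hw with ⟨p, hp, hwp⟩ | rfl
        · have hpe : p = (a, b) := by simpa using hp
          subst hpe
          simp only [Finset.mem_insert, Finset.mem_singleton] at hwp ⊢
          tauto
        · simp
      have habD : a ∈ D ∨ b ∈ D := by
        obtain ⟨w, hw⟩ := hhit
        rw [Finset.mem_inter, Finset.mem_insert, Finset.mem_singleton] at hw
        rcases hw.1 with rfl | rfl
        · exact Or.inl hw.2
        · exact Or.inr hw.2
      have hcard3 : ({a, b, fz hn} : Finset (Fin n)).card ≤ 4 := by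
        refine le_trans (Finset.card_insert_le _ _) (Nat.succ_le_succ ?_)
        refine le_trans (Finset.card_insert_le _ _) (Nat.succ_le_succ ?_)
        simp
      have hpD : pick hn {a, b, fz hn} ∉ D :=
        fun h => pick_not_mem hn _ hcard3 (hsub h)
      simp only [res, GTTree.run]
      by_cases ha : a ∈ D
      · rw [if_pos ((inter_pair_nonempty hpD).mpr ha)]
        by_cases hb : b ∈ D
        · rw [if_pos ((inter_pair_nonempty hpD).mpr hb)]
          exact Finset.eq_of_subset_of_card_le
            (Finset.insert_subset_iff.mpr ⟨ha, Finset.singleton_subset_iff.mpr hb⟩)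
            (by rw [hD, card_pair hab])
        · rw [if_neg (fun h => hb ((inter_pair_nonempty hpD).mp h))]
          have hsub2 : D ⊆ {a, fz hn} := by
            intro w hw
            have := hsub hw
            simp only [Finset.mem_insert, Finset.mem_singleton] at this ⊢
            rcases this with rfl | rfl | rfl
            · exact Or.inl rfl
            · exact absurd hw hb
            · exact Or.inr rfl
          exact (Finset.eq_of_subset_of_card_le hsub2
            (le_trans (Finset.card_insert_le _ _) (by rw [hD]; simp))).symm
      · rw [if_neg (fun h => ha ((inter_pair_nonempty hpD).mp h))]
        have hb : b ∈ D := habD.resolve_left ha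
        have hsub2 : D ⊆ {b, fz hn} := by
          intro w hw
          have := hsub hw
          simp only [Finset.mem_insert, Finset.mem_singleton] at this ⊢
          rcases this with rfl | rfl | rfl
          · exact absurd hw ha
          · exact Or.inl rfl
          · exact Or.inr rfl
        exact (Finset.eq_of_subset_of_card_le hsub2
          (le_trans (Finset.card_insert_le _ _) (by rw [hD]; simp))).symm
    · -- two (or more) positive pairs
      obtain ⟨⟨i, hi⟩, hhit1⟩ := hmem (a,b) (by simp)
      obtain ⟨⟨j, hj⟩, hhit2⟩ := hmem (c,d) (by simp)
      set D := ({x, y} : Finset (Fin n)) with hDdef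
      have hnd : ((a,b) : Fin n × Fin n) ≠ (c,d) := by
        have := hnodup
        rw [List.nodup_cons] at this
        intro h
        exact this.1 (h ▸ List.mem_cons_self)
      have hij : i.val ≠ j.val :=
        fun h => hnd (by rw [← hi, ← hj, Fin.ext (h : i.val = j.val)])
      have hav : 2*i.val = a.val := congrArg (fun p => (Prod.fst p).val) hi
      have hbv : 2*i.val + 1 = b.val := congrArg (fun p => (Prod.snd p).val) hi
      have hcv : 2*j.val = c.val := congrArg (fun p => (Prod.fst p).val) hj
      have hdv : 2*j.val + 1 = d.val := congrArg (fun p => (Prod.snd p).val) hj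
      obtain ⟨x1, hx1⟩ := hhit1
      obtain ⟨x2, hx2⟩ := hhit2
      rw [Finset.mem_inter, Finset.mem_insert, Finset.mem_singleton] at hx1 hx2
      have hv1 : x1.val = 2*i.val ∨ x1.val = 2*i.val + 1 := by
        rcases hx1.1 with rfl | rfl <;> omega
      have hv2 : x2.val = 2*j.val ∨ x2.val = 2*j.val + 1 := by
        rcases hx2.1 with rfl | rfl <;> omega
      have hx12 : x1 ≠ x2 := fun h => by rw [Fin.ext_iff] at h; omega
      have hDeq : ({x1, x2} : Finset (Fin n)) = D :=
        Finset.eq_of_subset_of_card_le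
          (Finset.insert_subset_iff.mpr ⟨hx1.2, Finset.singleton_subset_iff.mpr hx2.2⟩)
          (by rw [hD, card_pair hx12])
      have hsub : D ⊆ {a, b, c, d} := by
        intro w hw
        rw [← hDeq, Finset.mem_insert, Finset.mem_singleton] at hw
        simp only [Finset.mem_insert, Finset.mem_singleton]
        rcases hw with h | h
        · rcases hx1.1 with h' | h'
          · exact Or.inl (h.trans h')
          · exact Or.inr (Or.inl (h.trans h'))
        · rcases hx2.1 with h' | h'
          · exact Or.inr (Or.inr (Or.inl (h.trans h')))
          · exact Or.inr (Or.inr (Or.inr (h.trans h')))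
      have hcard4 : ({a, b, c, d} : Finset (Fin n)).card ≤ 4 := by
        refine le_trans (Finset.card_insert_le _ _) (Nat.succ_le_succ ?_)
        refine le_trans (Finset.card_insert_le _ _) (Nat.succ_le_succ ?_)
        refine le_trans (Finset.card_insert_le _ _) (Nat.succ_le_succ ?_)
        simp
      have hqD : pick hn {a, b, c, d} ∉ D :=
        fun h => pick_not_mem hn _ hcard4 (hsub h)
      simp only [res, GTTree.run]
      by_cases ha : a ∈ D
      · rw [if_pos ((inter_pair_nonempty hqD).mpr ha)]
        by_cases hc : c ∈ D
        · rw [if_pos ((inter_pair_nonempty hqD).mpr hc)]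
          have hac : a ≠ c := fun h => by rw [Fin.ext_iff] at h; omega
          exact Finset.eq_of_subset_of_card_le
            (Finset.insert_subset_iff.mpr ⟨ha, Finset.singleton_subset_iff.mpr hc⟩)
            (by rw [hD, card_pair hac])
        · rw [if_neg (fun h => hc ((inter_pair_nonempty hqD).mp h))]
          have hd2 : d ∈ D := by
            rcases hx2.1 with rfl | rfl
            · exact absurd hx2.2 hc
            · exact hx2.2
          have had : a ≠ d := fun h => by rw [Fin.ext_iff] at h; omega
          exact Finset.eq_of_subset_of_card_le
            (Finset.insert_subset_iff.mpr ⟨ha, Finset.singleton_subset_iff.mpr hd2⟩)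
            (by rw [hD, card_pair had])
      · rw [if_neg (fun h => ha ((inter_pair_nonempty hqD).mp h))]
        have hb2 : b ∈ D := by
          rcases hx1.1 with rfl | rfl
          · exact absurd hx1.2 ha
          · exact hx1.2
        by_cases hc : c ∈ D
        · rw [if_pos ((inter_pair_nonempty hqD).mpr hc)]
          have hbc : b ≠ c := fun h => by rw [Fin.ext_iff] at h; omega
          exact Finset.eq_of_subset_of_card_le
            (Finset.insert_subset_iff.mpr ⟨hb2, Finset.singleton_subset_iff.mpr hc⟩)
            (by rw [hD, card_pair hbc])
        · rw [if_neg (fun h => hc ((inter_pair_nonempty hqD).mp h))]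
          have hd2 : d ∈ D := by
            rcases hx2.1 with rfl | rfl
            · exact absurd hx2.2 hc
            · exact hx2.2
          have hbd : b ≠ d := fun h => by rw [Fin.ext_iff] at h; omega
          exact Finset.eq_of_subset_of_card_le
            (Finset.insert_subset_iff.mpr ⟨hb2, Finset.singleton_subset_iff.mpr hd2⟩)
            (by rw [hD, card_pair hbd])
  · have := phase_depth (res hn) (res_depth hn) (L n) []
    rwa [length_L] at this

end Upper
theorem stmt16 (n : ℕ) (hn : 5 ≤ n) : Mfix 2 2 n = ((n / 2 + 2 : ℕ) : ℕ∞) := by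
  apply le_antisymm
  · obtain ⟨T, hK, hS, hd⟩ := Upper.upper hn
    calc Mfix 2 2 n ≤ (T.depth : ℕ∞) := sInf_le ⟨T, hK, hS, rfl⟩
      _ ≤ ((n / 2 + 2 : ℕ) : ℕ∞) := by exact_mod_cast hd
  · apply le_sInf
    rintro c ⟨T, hK, hS, rfl⟩
    exact_mod_cast lower_bound hn T hK hS
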